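/- Fix ε > 0, a finite label set Y ⊆ ℝ and a finite output set O ⊆ ℝ. Let M be an extreme point (vertex) of the convex polytope of feasible matrices, and suppose the number k of non-zero columns of M satisfies k ≥ 2. Then there exist k pairwise distinct labels y_1, …, y_k ∈ Y such that for every i ∈ {1, …, k} and every non-zero column ŷ, M_{y_i→ŷ} ∈ {p^min_ŷ, e^ε · p^min_ŷ}, and the k rows of M indexed by y_1, …, y_k, restricted to the non-zero columns, are pairwise distinct. -/

import Mathlib

/-- The convex polytope of feasible transition matrices from the label set `Y` to
the output set `O`: nonnegative entries, rows summing to one, `eps`-DP constraint. -/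
def Feas (eps : ℝ) (Y O : Finset ℝ) : Set (↥Y → ↥O → ℝ) :=
  { N | (∀ y yh, 0 ≤ N y yh) ∧ (∀ y, ∑ yh, N y yh = 1) ∧
        (∀ y y' yh, N y' yh ≤ Real.exp eps * N y yh) }

/-- Minimum of a column. -/
noncomputable def pmin (Y O : Finset ℝ) (M : ↥Y → ↥O → ℝ) (yh : ↥O) : ℝ :=
  sInf (Set.range fun y => M y yh)

/-- A non-zero column. -/
def colNZ (Y O : Finset ℝ) (M : ↥Y → ↥O → ℝ) (yh : ↥O) : Prop :=
  ∃ y, 0 < M y yh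

open Classical in
/-- Weight of an entry : 1 at the column minimum, `exp eps` at the maximum, else 0. -/
noncomputable def wgt (eps : ℝ) (Y O : Finset ℝ) (M : ↥Y → ↥O → ℝ) (y : ↥Y) (yh : ↥O) : ℝ :=
  if M y yh = pmin Y O M yh then 1
  else if M y yh = Real.exp eps * pmin Y O M yh then Real.exp eps else 0

/-- An extremal row: all entries on non-zero columns are at the min or the max. -/
def ExtRow (eps : ℝ) (Y O : Finset ℝ) (M : ↥Y → ↥O → ℝ) (y : ↥Y) : Prop :=
  ∀ yh, colNZ Y O M yh → M y yh = pmin Y O M yh ∨ M y yh = Real.exp eps * pmin Y O M yh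

section Facts

variable {eps : ℝ} {Y O : Finset ℝ} {M : ↥Y → ↥O → ℝ}

lemma pmin_le [Nonempty ↥Y] (yh : ↥O) (y : ↥Y) : pmin Y O M yh ≤ M y yh :=
  csInf_le (Set.finite_range _).bddBelow ⟨y, rfl⟩

lemma exists_pmin [Nonempty ↥Y] (yh : ↥O) : ∃ y0, M y0 yh = pmin Y O M yh := by
  obtain ⟨y0, h⟩ := (Set.range_nonempty (fun y => M y yh)).csInf_mem (Set.finite_range _)
  exact ⟨y0, h⟩

lemma col_zero (hM : M ∈ Feas eps Y O) (yh : ↥O) (h : ¬ colNZ Y O M yh) (y : ↥Y) :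
    M y yh = 0 :=
  le_antisymm (not_lt.1 fun hc => h ⟨y, hc⟩) (hM.1 y yh)

lemma pmin_pos [Nonempty ↥Y] (hM : M ∈ Feas eps Y O) (yh : ↥O) (h : colNZ Y O M yh) :
    0 < pmin Y O M yh := by
  obtain ⟨y1, hy1⟩ := h
  obtain ⟨y0, hy0⟩ := exists_pmin (M := M) yh
  have h2 := hM.2.2 y0 y1 yh
  rw [hy0] at h2
  by_contra hc
  push_neg at hc
  have : Real.exp eps * pmin Y O M yh ≤ 0 :=
    mul_nonpos_of_nonneg_of_nonpos (Real.exp_pos eps).le hc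
  linarith

lemma le_ub [Nonempty ↥Y] (hM : M ∈ Feas eps Y O) (yh : ↥O) (y : ↥Y) :
    M y yh ≤ Real.exp eps * pmin Y O M yh := by
  obtain ⟨y0, hy0⟩ := exists_pmin (M := M) yh
  calc M y yh ≤ Real.exp eps * M y0 yh := hM.2.2 y0 y yh
  _ = Real.exp eps * pmin Y O M yh := by rw [hy0]

lemma one_lt_exp (heps : 0 < eps) : 1 < Real.exp eps := by
  rw [← Real.exp_zero]; exact Real.exp_lt_exp.2 heps

lemma pmin_ne [Nonempty ↥Y] (heps : 0 < eps) (hM : M ∈ Feas eps Y O) (yh : ↥O)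
    (h : colNZ Y O M yh) : pmin Y O M yh ≠ Real.exp eps * pmin Y O M yh := by
  have h1 := pmin_pos hM yh h
  have h2 := one_lt_exp heps
  nlinarith

lemma wgt_min (yh : ↥O) (y : ↥Y) (h : M y yh = pmin Y O M yh) :
    wgt eps Y O M y yh = 1 := by
  rw [wgt, if_pos h]

lemma wgt_max [Nonempty ↥Y] (heps : 0 < eps) (hM : M ∈ Feas eps Y O) (yh : ↥O) (y : ↥Y)
    (hNZ : colNZ Y O M yh) (h : M y yh = Real.exp eps * pmin Y O M yh) :
    wgt eps Y O M y yh = Real.exp eps := by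
  rw [wgt, if_neg, if_pos h]
  rw [h]
  exact fun hc => pmin_ne heps hM yh hNZ hc.symm

end Facts

/-- Kernel existence from a dimension count. -/
lemma aux_exists_ker {ι κ : Type*} [Fintype ι] [Fintype κ]
    (h : Fintype.card κ < Fintype.card ι) (V : κ → ι → ℝ) :
    ∃ δ : ι → ℝ, δ ≠ 0 ∧ ∀ c, ∑ i, δ i * V c i = 0 := by
  by_contra hcon
  push_neg at hcon
  let Ψ : (ι → ℝ) →ₗ[ℝ] (κ → ℝ) :=
    { toFun := fun δ c => ∑ i, δ i * V c i
      map_add' := by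
        intro a b; funext c
        simp [add_mul, Finset.sum_add_distrib]
      map_smul' := by
        intro r a; funext c
        simp [Finset.mul_sum, mul_assoc] }
  have hinj : Function.Injective Ψ := by
    rw [injective_iff_map_eq_zero]
    intro a ha
    by_contra hne
    obtain ⟨c, hc⟩ := hcon a hne
    exact hc (congrFun ha c)
  have := LinearMap.finrank_le_finrank_of_injective hinj
  rw [Module.finrank_fintype_fun_eq_card, Module.finrank_fintype_fun_eq_card] at this
  omega

/-- Main perturbation lemma: at an extreme point, any column-shift direction `δ`
orthogonal to the weight patterns of all extremal rows must vanish. -/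
lemma key (eps : ℝ) (heps : 0 < eps) (Y O : Finset ℝ) (M : ↥Y → ↥O → ℝ)
    (hMext : M ∈ Set.extremePoints ℝ (Feas eps Y O))
    [Nonempty ↥Y] [Nonempty ↥O]
    (δ : ↥O → ℝ)
    (hδ0 : ∀ yh, ¬ colNZ Y O M yh → δ yh = 0)
    (hδ : ∀ y, ExtRow eps Y O M y → ∑ yh, δ yh * wgt eps Y O M y yh = 0) :
    δ = 0 := by
  classical
  obtain ⟨hM, hMx⟩ := hMext
  obtain ⟨hnn, hsum, hdp⟩ := hM
  have hMfeas : M ∈ Feas eps Y O := ⟨hnn, hsum, hdp⟩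
  have hexp0 : (0:ℝ) < Real.exp eps := Real.exp_pos eps
  -- choice of an interior column for non-extremal rows
  have hchoice : ∀ y, ¬ ExtRow eps Y O M y → ∃ yh, colNZ Y O M yh ∧
      M y yh ≠ pmin Y O M yh ∧ M y yh ≠ Real.exp eps * pmin Y O M yh := by
    intro y hy
    rw [ExtRow] at hy
    push_neg at hy
    obtain ⟨yh, h1, h2, h3⟩ := hy
    exact ⟨yh, h1, h2, h3⟩
  set g : ↥Y → ↥O := fun y =>
    if h : ¬ ExtRow eps Y O M y then (hchoice y h).choose else Classical.arbitrary ↥O with hg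
  have hgP : ∀ y (h : ¬ ExtRow eps Y O M y), colNZ Y O M (g y) ∧
      M y (g y) ≠ pmin Y O M (g y) ∧ M y (g y) ≠ Real.exp eps * pmin Y O M (g y) := by
    intro y h
    simp only [hg, dif_pos h]
    exact (hchoice y h).choose_spec
  set c : ↥Y → ℝ := fun y => ∑ yh, δ yh * wgt eps Y O M y yh with hc
  set d : ↥Y → ↥O → ℝ := fun y yh => δ yh * wgt eps Y O M y yh +
      (if (¬ ExtRow eps Y O M y ∧ yh = g y) then -(c y) else 0) with hd
  -- basic facts about d
  have hd0 : ∀ y yh, ¬ colNZ Y O M yh → d y yh = 0 := by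
    intro y yh hP
    have hcorr : ¬ (¬ ExtRow eps Y O M y ∧ yh = g y) := by
      rintro ⟨hny, hgy⟩
      exact hP (hgy ▸ (hgP y hny).1)
    simp [hd, hδ0 yh hP, hcorr]
  have hdmin : ∀ y yh, M y yh = pmin Y O M yh → d y yh = δ yh := by
    intro y yh hMy
    have hcorr : ¬ (¬ ExtRow eps Y O M y ∧ yh = g y) := by
      rintro ⟨hny, hgy⟩
      exact (hgP y hny).2.1 (by rw [← hgy]; exact hMy)
    simp [hd, wgt_min yh y hMy, hcorr]
  have hdmax : ∀ y yh, colNZ Y O M yh → M y yh = Real.exp eps * pmin Y O M yh →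
      d y yh = Real.exp eps * δ yh := by
    intro y yh hP hMy
    have hcorr : ¬ (¬ ExtRow eps Y O M y ∧ yh = g y) := by
      rintro ⟨hny, hgy⟩
      exact (hgP y hny).2.2 (by rw [← hgy]; exact hMy)
    simp [hd, wgt_max heps hMfeas yh y hP hMy, hcorr, mul_comm]
  have hdsum : ∀ y, ∑ yh, d y yh = 0 := by
    intro y
    by_cases hy : ExtRow eps Y O M y
    · have : ∀ yh : ↥O, (if (¬ ExtRow eps Y O M y ∧ yh = g y) then -(c y) else 0) = 0 := by
        intro yh; rw [if_neg]; tauto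
      simp only [hd, Finset.sum_add_distrib]
      rw [Finset.sum_congr rfl (fun yh _ => this yh), Finset.sum_const_zero, add_zero]
      exact hδ y hy
    · simp only [hd, Finset.sum_add_distrib]
      have h2 : ∑ yh : ↥O, (if (¬ ExtRow eps Y O M y ∧ yh = g y) then -(c y) else 0)
          = -(c y) := by
        have hiff : ∀ yh : ↥O, (if (¬ ExtRow eps Y O M y ∧ yh = g y) then -(c y) else 0)
            = (if yh = g y then -(c y) else 0) := by
          intro yh
          by_cases h : yh = g y <;> simp [h, hy]
        rw [Finset.sum_congr rfl (fun yh _ => hiff yh), Finset.sum_ite_eq']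
        simp
      rw [h2]
      have h1 : ∑ yh, δ yh * wgt eps Y O M y yh = c y := rfl
      rw [h1]; ring
  -- size bounds
  set T : ℝ := ∑ y : ↥Y, ∑ yh : ↥O, |d y yh| with hT
  have hT0 : 0 ≤ T :=
    Finset.sum_nonneg fun y _ => Finset.sum_nonneg fun yh _ => abs_nonneg _
  have hdT : ∀ y yh, |d y yh| ≤ T := by
    intro y yh
    calc |d y yh| ≤ ∑ yh' : ↥O, |d y yh'| :=
          Finset.single_le_sum (f := fun yh' => |d y yh'|)
            (fun _ _ => abs_nonneg _) (Finset.mem_univ _)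
    _ ≤ T := Finset.single_le_sum (f := fun y' => ∑ yh' : ↥O, |d y' yh'|)
          (fun y' _ => Finset.sum_nonneg fun yh' _ => abs_nonneg _) (Finset.mem_univ y)
  set C : ℝ := 1 + (1 + Real.exp eps) * T with hC
  have hC0 : (0:ℝ) < C := by nlinarith
  have hCd : ∀ y yh, |d y yh| ≤ C := by
    intro y yh; have := hdT y yh; nlinarith
  have hCd2 : ∀ y y' yh, |d y' yh| + Real.exp eps * |d y yh| ≤ C := by
    intro y y' yh
    have h1 := hdT y' yh; have h2 := hdT y yh
    have h3 : Real.exp eps * |d y yh| ≤ Real.exp eps * T :=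
      mul_le_mul_of_nonneg_left h2 hexp0.le
    nlinarith
  -- minimal slack
  have hune : (Finset.univ : Finset ↥O).Nonempty := Finset.univ_nonempty
  set m1 : ℝ := Finset.univ.inf' hune (fun yh => if 0 < pmin Y O M yh then pmin Y O M yh else 1)
    with hm1def
  have hm1 : 0 < m1 := by
    rw [hm1def, Finset.lt_inf'_iff]
    intro yh _
    split
    · assumption
    · norm_num
  have hm1le : ∀ yh, colNZ Y O M yh → m1 ≤ pmin Y O M yh := by
    intro yh hP
    have h := Finset.inf'_le (f := fun yh => if 0 < pmin Y O M yh then pmin Y O M yh else 1)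
      (Finset.mem_univ yh)
    rw [← hm1def] at h
    rwa [if_pos (pmin_pos hMfeas yh hP)] at h
  have hune2 : (Finset.univ : Finset (↥Y × ↥Y × ↥O)).Nonempty := Finset.univ_nonempty
  set F2 : ↥Y × ↥Y × ↥O → ℝ := fun z =>
    if 0 < Real.exp eps * M z.1 z.2.2 - M z.2.1 z.2.2
    then Real.exp eps * M z.1 z.2.2 - M z.2.1 z.2.2 else 1 with hF2
  set m2 : ℝ := Finset.univ.inf' hune2 F2 with hm2def
  have hm2 : 0 < m2 := by
    rw [hm2def, Finset.lt_inf'_iff]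
    intro z _
    simp only [hF2]
    split
    · assumption
    · norm_num
  have hm2le : ∀ y y' yh, M y' yh < Real.exp eps * M y yh →
      m2 ≤ Real.exp eps * M y yh - M y' yh := by
    intro y y' yh hlt
    have h := Finset.inf'_le (f := F2) (Finset.mem_univ (y, y', yh))
    rw [← hm2def] at h
    simp only [hF2] at h
    rwa [if_pos (by linarith)] at h
  set m : ℝ := min m1 m2 with hmdef
  have hm : 0 < m := lt_min hm1 hm2
  set t : ℝ := m / C with htdef
  have ht : 0 < t := div_pos hm hC0
  have htC : t * C = m := div_mul_cancel₀ m (ne_of_gt hC0)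
  -- feasibility of perturbations
  have hfeas : ∀ s : ℝ, |s| ≤ t → (fun y yh => M y yh + s * d y yh) ∈ Feas eps Y O := by
    intro s hs
    have hsd1 : ∀ y yh, |s * d y yh| ≤ m := by
      intro y yh
      rw [abs_mul]
      calc |s| * |d y yh| ≤ t * C := mul_le_mul hs (hCd y yh) (abs_nonneg _) ht.le
      _ = m := htC
    have hsd2 : ∀ y y' yh, |s| * (|d y' yh| + Real.exp eps * |d y yh|) ≤ m := by
      intro y y' yh
      calc |s| * (|d y' yh| + Real.exp eps * |d y yh|) ≤ t * C :=
            mul_le_mul hs (hCd2 y y' yh) (by positivity) ht.le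
      _ = m := htC
    refine ⟨?_, ?_, ?_⟩
    · intro y yh
      show 0 ≤ M y yh + s * d y yh
      by_cases hP : colNZ Y O M yh
      · have h1 := hsd1 y yh
        have h2 := neg_abs_le (s * d y yh)
        have h3 := pmin_le (M := M) yh y
        have h4 := hm1le yh hP
        have h5 : m ≤ m1 := min_le_left _ _
        linarith
      · rw [hd0 y yh hP, col_zero hMfeas yh hP y]
        simp
    · intro y
      show ∑ yh : ↥O, (M y yh + s * d y yh) = 1
      rw [Finset.sum_add_distrib, hsum y, ← Finset.mul_sum, hdsum y, mul_zero, add_zero]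
    · intro y y' yh
      show M y' yh + s * d y' yh ≤ Real.exp eps * (M y yh + s * d y yh)
      by_cases hP : colNZ Y O M yh
      · rcases lt_or_eq_of_le (hdp y y' yh) with hlt | heqt
        · -- slack case
          have e4 : m ≤ Real.exp eps * M y yh - M y' yh :=
            le_trans (min_le_right _ _) (hm2le y y' yh hlt)
          have e0 := hsd2 y y' yh
          have e5 : |s| * (|d y' yh| + Real.exp eps * |d y yh|)
              = |s| * |d y' yh| + Real.exp eps * (|s| * |d y yh|) := by ring
          rw [e5] at e0
          have e1 : s * d y' yh ≤ |s| * |d y' yh| := by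
            rw [← abs_mul]; exact le_abs_self _
          have e2 : -(|s| * |d y yh|) ≤ s * d y yh := by
            rw [← abs_mul]; exact neg_abs_le _
          have e3 : Real.exp eps * (-(|s| * |d y yh|)) ≤ Real.exp eps * (s * d y yh) :=
            mul_le_mul_of_nonneg_left e2 hexp0.le
          have goal2 : M y' yh + s * d y' yh
              ≤ Real.exp eps * M y yh + Real.exp eps * (s * d y yh) := by linarith
          calc M y' yh + s * d y' yh
              ≤ Real.exp eps * M y yh + Real.exp eps * (s * d y yh) := goal2
          _ = Real.exp eps * (M y yh + s * d y yh) := by ring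
        · -- tight case
          have hy : M y yh = pmin Y O M yh := by
            have h1 := le_ub hMfeas yh y'
            rw [heqt] at h1
            have h2 : M y yh ≤ pmin Y O M yh := le_of_mul_le_mul_left h1 hexp0
            exact le_antisymm h2 (pmin_le yh y)
          have hy' : M y' yh = Real.exp eps * pmin Y O M yh := by
            rw [heqt, hy]
          rw [hdmin y yh hy, hdmax y' yh hP hy', hy, hy']
          apply le_of_eq; ring
      · rw [hd0 y yh hP, hd0 y' yh hP, col_zero hMfeas yh hP y, col_zero hMfeas yh hP y']
        simp
  -- extract d = 0 via extremality
  have h1 := hfeas (-t) (by rw [abs_neg, abs_of_pos ht])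
  have h2 := hfeas t (by rw [abs_of_pos ht])
  have hseg : M ∈ openSegment ℝ (fun y yh => M y yh + (-t) * d y yh)
      (fun y yh => M y yh + t * d y yh) := by
    refine ⟨1/2, 1/2, by norm_num, by norm_num, by norm_num, ?_⟩
    funext y yh
    show (1:ℝ)/2 * (M y yh + (-t) * d y yh) + (1:ℝ)/2 * (M y yh + t * d y yh) = M y yh
    ring
  obtain ⟨-, h2eq⟩ := (mem_extremePoints.1
    (show M ∈ (Feas eps Y O).extremePoints ℝ from ⟨hMfeas, hMx⟩)).2 _ h1 _ h2 hseg
  have hd_zero : ∀ y yh, d y yh = 0 := by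
    intro y yh
    have h : M y yh + t * d y yh = M y yh := congrFun (congrFun h2eq y) yh
    have h' : t * d y yh = 0 := by linarith
    exact (mul_eq_zero.1 h').resolve_left (ne_of_gt ht)
  -- conclude δ = 0
  funext yh
  by_cases hP : colNZ Y O M yh
  · obtain ⟨y0, hy0⟩ := exists_pmin (M := M) yh
    have h := hd_zero y0 yh
    rw [hdmin y0 yh hy0] at h
    simpa using h
  · simpa using hδ0 yh hP

/-- Any vertex (extreme point) of the feasible polytope with `k ≥ 2` non-zero
columns has a `k × k` submatrix with pairwise distinct rows all of whose entries
are `p^min` or `exp eps * p^min` of the corresponding column. -/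
theorem stmt4
    (eps : ℝ) (heps : 0 < eps)
    (Y O : Finset ℝ)
    (M : ↥Y → ↥O → ℝ)
    (hMext : M ∈ Set.extremePoints ℝ (Feas eps Y O))
    (k : ℕ)
    (hk : k = {yh : ↥O | ∃ y, 0 < M y yh}.ncard)
    (hk2 : 2 ≤ k) :
    ∃ f : Fin k → ↥Y, Function.Injective f ∧
      (∀ i : Fin k, ∀ yh : ↥O, (∃ y, 0 < M y yh) →
        M (f i) yh = sInf (Set.range fun y => M y yh) ∨
        M (f i) yh = Real.exp eps * sInf (Set.range fun y => M y yh)) ∧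
      (∀ i j : Fin k, i ≠ j →
        ∃ yh : ↥O, (∃ y, 0 < M y yh) ∧ M (f i) yh ≠ M (f j) yh) := by
  classical
  have hMfeas : M ∈ Feas eps Y O := hMext.1
  -- nonemptiness
  have hSne : {yh : ↥O | ∃ y, 0 < M y yh}.Nonempty := by
    apply Set.nonempty_of_ncard_ne_zero
    omega
  obtain ⟨yh0, y1, hy1⟩ := hSne
  haveI hYne : Nonempty ↥Y := ⟨y1⟩
  haveI hOne : Nonempty ↥O := ⟨yh0⟩
  -- the pattern map
  set u : ↥Y → ↥O → ℝ := fun y yh => if colNZ Y O M yh then wgt eps Y O M y yh else 0 with hu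
  set G : Finset (↥O → ℝ) :=
    (Finset.univ.filter (ExtRow eps Y O M)).image u with hG
  have hkcard : Nat.card {yh : ↥O // colNZ Y O M yh} = k := by
    rw [hk]; exact Nat.card_coe_set_eq _
  -- G has at least k elements
  have hGcard : k ≤ G.card := by
    by_contra hlt
    push_neg at hlt
    have hcard : Fintype.card ↥G < Fintype.card {yh : ↥O // colNZ Y O M yh} := by
      have e1 : Nat.card ↥G = Fintype.card ↥G := Nat.card_eq_fintype_card
      have e2 : Nat.card {yh : ↥O // colNZ Y O M yh}
          = Fintype.card {yh : ↥O // colNZ Y O M yh} := Nat.card_eq_fintype_card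
      have e4 : Fintype.card ↥G = G.card := Fintype.card_coe G
      omega
    obtain ⟨δ, hδne, hδker⟩ := aux_exists_ker hcard (fun gq i => (gq : ↥O → ℝ) i.val)
    set δ' : ↥O → ℝ := fun yh => if h : colNZ Y O M yh then δ ⟨yh, h⟩ else 0 with hδ'
    have hδ'0 : ∀ yh, ¬ colNZ Y O M yh → δ' yh = 0 := fun yh h => dif_neg h
    have hδ'sum : ∀ y, ExtRow eps Y O M y → ∑ yh, δ' yh * wgt eps Y O M y yh = 0 := by
      intro y hy
      have hmemG : u y ∈ G := by
        rw [hG]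
        exact Finset.mem_image_of_mem u (Finset.mem_filter.2 ⟨Finset.mem_univ y, hy⟩)
      have hker := hδker ⟨u y, hmemG⟩
      have step1 : ∑ yh : ↥O, δ' yh * wgt eps Y O M y yh
          = ∑ yh : ↥O, (if colNZ Y O M yh then δ' yh * wgt eps Y O M y yh else 0) := by
        apply Finset.sum_congr rfl
        intro yh _
        by_cases hp : colNZ Y O M yh
        · rw [if_pos hp]
        · rw [if_neg hp, hδ'0 yh hp, zero_mul]
      have step2 : ∑ yh : ↥O, (if colNZ Y O M yh then δ' yh * wgt eps Y O M y yh else 0)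
          = ∑ i : {yh : ↥O // colNZ Y O M yh}, δ' i.val * wgt eps Y O M y i.val := by
        rw [← Finset.sum_filter]
        exact Finset.sum_subtype _ (by simp) _
      have step3 : ∀ i : {yh : ↥O // colNZ Y O M yh},
          δ' i.val * wgt eps Y O M y i.val = δ i * (u y) i.val := by
        intro i
        rw [hδ', hu]
        simp only [dif_pos i.2, if_pos i.2, Subtype.coe_eta]
      rw [step1, step2, Finset.sum_congr rfl (fun i _ => step3 i)]
      exact hker
    have := key eps heps Y O M hMext δ' hδ'0 hδ'sum
    apply hδne
    funext i
    have h := congrFun this i.val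
    rw [hδ'] at h
    simpa [dif_pos i.2, Subtype.coe_eta] using h
  -- choose k distinct patterns and representative rows
  have hcardle : Fintype.card (Fin k) ≤ Fintype.card ↥G := by
    rw [Fintype.card_fin, Fintype.card_coe]
    exact hGcard
  obtain ⟨emb⟩ := Function.Embedding.nonempty_iff_card_le.2 hcardle
  have hsel : ∀ gq : ↥G, ∃ y, ExtRow eps Y O M y ∧ u y = gq.val := by
    rintro ⟨gv, hgv⟩
    rw [hG] at hgv
    obtain ⟨y, hy, huy⟩ := Finset.mem_image.1 hgv
    exact ⟨y, (Finset.mem_filter.1 hy).2, huy⟩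
  choose sel hselE hselU using hsel
  refine ⟨fun i => sel (emb i), ?_, ?_, ?_⟩
  · intro i j hij
    have hij' : sel (emb i) = sel (emb j) := hij
    apply emb.injective
    apply Subtype.ext
    rw [← hselU (emb i), ← hselU (emb j), hij']
  · intro i yh hP
    exact hselE (emb i) yh hP
  · intro i j hij
    have hne : u (sel (emb i)) ≠ u (sel (emb j)) := by
      rw [hselU (emb i), hselU (emb j)]
      intro hc
      exact hij (emb.injective (Subtype.ext hc))
    obtain ⟨yh, hyh⟩ := Function.ne_iff.1 hne
    have hP : colNZ Y O M yh := by
      by_contra hp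
      apply hyh
      rw [hu]
      simp [hp]
    refine ⟨yh, hP, ?_⟩
    intro hMeq
    apply hyh
    rw [hu]
    simp only [if_pos hP, wgt, hMeq]
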